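/- Let (Ω, μ) be a σ-finite measure space, I a finite index set, and for each i ∈ I let p_i : Ω → ℝ be a nonnegative measurable probability density (∫ p_i dμ = 1). Let ω_i ≥ 0 with ∑_{i∈I} ω_i = 1, and assume c := ∫ ∏_{i∈I} p_i(x)^{ω_i} dμ(x) is positive and finite. Define the normalized weighted geometric mean p̄(x) = c^{-1} ∏_{i∈I} p_i(x)^{ω_i}. Then p̄ minimizes the weighted sum of Kullback–Leibler divergences: for every probability density q on (Ω, μ), ∑_{i∈I} ω_i D_KL(p̄ ‖ p_i) ≤ ∑_{i∈I} ω_i D_KL(q ‖ p_i) (with values in [0, ∞]). -/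

import Mathlib

open MeasureTheory
open scoped ENNReal Classical

/-- Kullback–Leibler divergence of density `q` from density `p` w.r.t. measure `μ`,
with values in `[0, ∞]`: it is `∞` unless `p` is absolutely continuous w.r.t. `q`
(in the sense that `q x = 0 → p x = 0` a.e.) and the integrand is integrable. -/
noncomputable def klDiv {Ω : Type*} [MeasurableSpace Ω] (μ : Measure Ω)
    (p q : Ω → ℝ) : ℝ≥0∞ :=
  if (∀ᵐ x ∂μ, q x = 0 → p x = 0) ∧
      Integrable (fun x => p x * Real.log (p x / q x)) μ then
    ENNReal.ofReal (∫ x, p x * Real.log (p x / q x) ∂μ)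
  else ⊤

/-- Pointwise Gibbs inequality: `a - b ≤ a * log (a / b)` for nonnegative `a, b`
with `b = 0 → a = 0`. -/
lemma gibbs_pointwise {a b : ℝ} (ha : 0 ≤ a) (hb : 0 ≤ b) (h : b = 0 → a = 0) :
    a - b ≤ a * Real.log (a / b) := by
  rcases eq_or_lt_of_le ha with ha0 | ha0
  · simp [← ha0]
    exact hb
  · rcases eq_or_lt_of_le hb with hb0 | hb0
    · exact absurd (h hb0.symm) ha0.ne'
    · have hlog : Real.log (b / a) ≤ b / a - 1 :=
        Real.log_le_sub_one_of_pos (div_pos hb0 ha0)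
      have hba : Real.log (b / a) = - Real.log (a / b) := by
        rw [← Real.log_inv, inv_div]
      rw [hba] at hlog
      have : 1 - b / a ≤ Real.log (a / b) := by linarith
      calc a - b = a * (1 - b / a) := by field_simp
        _ ≤ a * Real.log (a / b) := mul_le_mul_of_nonneg_left this ha0.le

lemma my_integrable_of_integral_eq_one {Ω : Type*} [MeasurableSpace Ω] {μ : Measure Ω}
    {f : Ω → ℝ} (h : ∫ x, f x ∂μ = 1) : Integrable f μ := by
  by_contra hc
  rw [integral_undef hc] at h
  norm_num at h

/-- The normalized weighted geometric mean of probability densities minimizes the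
weighted sum of Kullback–Leibler divergences. -/
theorem kla_minimizes_weighted_klDiv
    {Ω : Type*} [MeasurableSpace Ω] (μ : Measure Ω) [SigmaFinite μ]
    {I : Type*} [Fintype I]
    (p : I → Ω → ℝ)
    (hpmeas : ∀ i, Measurable (p i))
    (hpnn : ∀ i x, 0 ≤ p i x)
    (hpnorm : ∀ i, ∫ x, p i x ∂μ = 1)
    (ω : I → ℝ) (hωnn : ∀ i, 0 ≤ ω i) (hωsum : ∑ i, ω i = 1)
    (hc_pos : 0 < ∫ x, ∏ i, p i x ^ ω i ∂μ)
    (hc_fin : Integrable (fun x => ∏ i, p i x ^ ω i) μ)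
    (pbar : Ω → ℝ)
    (hpbar : pbar = fun x => (∫ y, ∏ i, p i y ^ ω i ∂μ)⁻¹ * ∏ i, p i x ^ ω i)
    (q : Ω → ℝ)
    (hqmeas : Measurable q) (hqnn : ∀ x, 0 ≤ q x) (hqnorm : ∫ x, q x ∂μ = 1) :
    ∑ i, ENNReal.ofReal (ω i) * klDiv μ pbar (p i) ≤
      ∑ i, ENNReal.ofReal (ω i) * klDiv μ q (p i) := by
  classical
  by_cases hcase : ∀ i, 0 < ω i → klDiv μ q (p i) ≠ ⊤
  swap
  · -- some term on the RHS is infinite, so the RHS is ⊤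
    push_neg at hcase
    obtain ⟨i, hωi, hi⟩ := hcase
    have h1 : ENNReal.ofReal (ω i) * klDiv μ q (p i) = ⊤ := by
      rw [hi, ENNReal.mul_top]
      simpa [ENNReal.ofReal_eq_zero, not_le] using hωi
    have h2 : (⊤ : ℝ≥0∞) ≤ ∑ i, ENNReal.ofReal (ω i) * klDiv μ q (p i) := by
      rw [← h1]
      exact Finset.single_le_sum (f := fun j => ENNReal.ofReal (ω j) * klDiv μ q (p j))
        (fun j _ => zero_le) (Finset.mem_univ i)
    exact le_trans le_top h2
  -- Main case: all RHS terms with positive weight are finite.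
  set c : ℝ := ∫ x, ∏ i, p i x ^ ω i ∂μ with hc_def
  set g : Ω → ℝ := fun x => ∏ i, p i x ^ ω i with hg_def
  have hgmeas : Measurable g :=
    Finset.measurable_prod _ (fun i _ => Measurable.pow (hpmeas i) measurable_const)
  have hgnn : ∀ x, 0 ≤ g x := fun x =>
    Finset.prod_nonneg fun i _ => Real.rpow_nonneg (hpnn i x) _
  have hpbarmeas : Measurable pbar := by rw [hpbar]; exact hgmeas.const_mul _
  have hpbarnn : ∀ x, 0 ≤ pbar x := by
    intro x; rw [hpbar]
    exact mul_nonneg (inv_nonneg.2 hc_pos.le) (hgnn x)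
  have hpbarint : Integrable pbar μ := by
    rw [hpbar]; exact hc_fin.const_mul _
  have hpbarnorm : ∫ x, pbar x ∂μ = 1 := by
    rw [hpbar, integral_const_mul, ← hg_def, ← hc_def, inv_mul_cancel₀ hc_pos.ne']
  have hpint : ∀ i, Integrable (p i) μ := fun i => my_integrable_of_integral_eq_one (hpnorm i)
  have hqint : Integrable q μ := my_integrable_of_integral_eq_one hqnorm
  -- absolute continuity of pbar w.r.t. each p i with positive weight
  have hAC : ∀ i, 0 < ω i → ∀ x, p i x = 0 → pbar x = 0 := by
    intro i hωi x hx
    rw [hpbar]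
    have : p i x ^ ω i = 0 := by rw [hx]; exact Real.zero_rpow hωi.ne'
    have hg0 : g x = 0 := Finset.prod_eq_zero (Finset.mem_univ i) this
    rw [hg_def] at hg0
    simp [hg0]
  -- if pbar x ≠ 0 then all relevant densities are positive at x
  have hpos_of_ne : ∀ x, g x ≠ 0 →
      (∀ i, 0 < p i x ^ ω i) ∧ (∀ i, 0 < ω i → 0 < p i x) := by
    intro x hx
    have hfac : ∀ i, p i x ^ ω i ≠ 0 := by
      intro i
      exact (Finset.prod_ne_zero_iff.1 hx) i (Finset.mem_univ i)
    constructor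
    · exact fun i => lt_of_le_of_ne (Real.rpow_nonneg (hpnn i x) _) (Ne.symm (hfac i))
    · intro i hωi
      by_contra h
      have hp0 : p i x = 0 := le_antisymm (not_lt.1 h) (hpnn i x)
      exact hfac i (by rw [hp0]; exact Real.zero_rpow hωi.ne')
  -- the key pointwise identity
  have key : ∀ (r : Ω → ℝ) (x : Ω), 0 ≤ r x →
      (∀ i, 0 < ω i → p i x = 0 → r x = 0) →
      ∑ i, ω i * (r x * Real.log (r x / p i x)) =
        r x * Real.log (r x / pbar x) - r x * Real.log c := by
    intro r x hrnn hx
    rcases eq_or_lt_of_le hrnn with hr0 | hr0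
    · simp [← hr0]
    · have hp_pos : ∀ i, 0 < ω i → 0 < p i x := by
        intro i hωi
        rcases eq_or_lt_of_le (hpnn i x) with h | h
        · exact absurd (hx i hωi h.symm) hr0.ne'
        · exact h
      have hfac_pos : ∀ i, 0 < p i x ^ ω i := by
        intro i
        rcases eq_or_lt_of_le (hωnn i) with h | h
        · rw [← h, Real.rpow_zero]; exact one_pos
        · exact Real.rpow_pos_of_pos (hp_pos i h) _
      have hg_pos : 0 < g x := Finset.prod_pos fun i _ => hfac_pos i
      have hlog_g : Real.log (g x) = ∑ i, ω i * Real.log (p i x) := by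
        rw [hg_def]
        rw [Real.log_prod (fun i _ => (hfac_pos i).ne')]
        refine Finset.sum_congr rfl fun i _ => ?_
        rcases eq_or_lt_of_le (hωnn i) with h | h
        · rw [← h, Real.rpow_zero, Real.log_one, zero_mul]
        · exact Real.log_rpow (hp_pos i h) _
      have hterm : ∀ i, ω i * (r x * Real.log (r x / p i x)) =
          ω i * (r x * Real.log (r x)) - r x * (ω i * Real.log (p i x)) := by
        intro i
        rcases eq_or_lt_of_le (hωnn i) with h | h
        · rw [← h]; ring
        · rw [Real.log_div hr0.ne' (hp_pos i h).ne']; ring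
      have hsum1 : ∑ i, ω i * (r x * Real.log (r x / p i x)) =
          r x * Real.log (r x) - r x * Real.log (g x) := by
        rw [hlog_g]
        calc ∑ i, ω i * (r x * Real.log (r x / p i x))
            = ∑ i, (ω i * (r x * Real.log (r x)) - r x * (ω i * Real.log (p i x))) :=
              Finset.sum_congr rfl fun i _ => hterm i
          _ = (∑ i, ω i) * (r x * Real.log (r x)) -
                r x * ∑ i, ω i * Real.log (p i x) := by
              rw [Finset.sum_sub_distrib, Finset.sum_mul, ← Finset.mul_sum]
          _ = r x * Real.log (r x) - r x * ∑ i, ω i * Real.log (p i x) := by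
              rw [hωsum, one_mul]
      have hpbar_pos : 0 < pbar x := by
        rw [hpbar]; exact mul_pos (inv_pos.2 hc_pos) hg_pos
      have hlog_pbar : Real.log (pbar x) = - Real.log c + Real.log (g x) := by
        rw [hpbar]
        rw [Real.log_mul (inv_ne_zero hc_pos.ne') hg_pos.ne', Real.log_inv]
      rw [hsum1, Real.log_div hr0.ne' hpbar_pos.ne', hlog_pbar]
      ring
  -- the functions appearing in the KL divergences
  set f : I → Ω → ℝ := fun i x => pbar x * Real.log (pbar x / p i x) with hf_def
  set G : I → Ω → ℝ := fun i x => q x * Real.log (q x / p i x) with hG_def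
  have hsum_f : ∀ x, ∑ i, ω i * f i x = -(pbar x * Real.log c) := by
    intro x
    have := key pbar x (hpbarnn x) (fun i hωi h => hAC i hωi x h)
    rw [hf_def]
    rw [this]
    rcases eq_or_lt_of_le (hpbarnn x) with h | h
    · simp [← h]
    · rw [div_self h.ne', Real.log_one]; ring
  have hf_lb : ∀ i, 0 < ω i → ∀ x, pbar x - p i x ≤ f i x := by
    intro i hωi x
    exact gibbs_pointwise (hpbarnn x) (hpnn i x) (hAC i hωi x)
  have hf_meas : ∀ i, Measurable (f i) := by
    intro i
    exact hpbarmeas.mul (Real.measurable_log.comp (hpbarmeas.div (hpmeas i)))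
  have hS_int : Integrable (fun x => -(pbar x * Real.log c)) μ :=
    (hpbarint.mul_const _).neg
  have hf_int : ∀ i, 0 < ω i → Integrable (f i) μ := by
    intro i hωi
    set U : Ω → ℝ := fun x => (ω i)⁻¹ * (-(pbar x * Real.log c) -
      ∑ j ∈ Finset.univ.erase i, ω j * (pbar x - p j x)) with hU_def
    have hU_int : Integrable U μ := by
      refine Integrable.const_mul (Integrable.sub hS_int ?_) _
      exact integrable_finset_sum _ fun j _ => ((hpbarint.sub (hpint j)).const_mul _)
    have hf_ub : ∀ x, f i x ≤ U x := by
      intro x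
      have hsplit : ω i * f i x + ∑ j ∈ Finset.univ.erase i, ω j * f j x =
          -(pbar x * Real.log c) := by
        rw [← hsum_f x]
        exact Finset.add_sum_erase _ (fun j => ω j * f j x) (Finset.mem_univ i)
      have hge : ∑ j ∈ Finset.univ.erase i, ω j * (pbar x - p j x) ≤
          ∑ j ∈ Finset.univ.erase i, ω j * f j x := by
        refine Finset.sum_le_sum fun j _ => ?_
        rcases eq_or_lt_of_le (hωnn j) with h | h
        · rw [← h]; simp
        · exact mul_le_mul_of_nonneg_left (hf_lb j h x) (hωnn j)
      have : ω i * f i x ≤ -(pbar x * Real.log c) -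
          ∑ j ∈ Finset.univ.erase i, ω j * (pbar x - p j x) := by linarith
      rw [hU_def]
      dsimp only
      calc f i x = (ω i)⁻¹ * (ω i * f i x) := by field_simp
        _ ≤ (ω i)⁻¹ * (-(pbar x * Real.log c) -
            ∑ j ∈ Finset.univ.erase i, ω j * (pbar x - p j x)) :=
          mul_le_mul_of_nonneg_left this (inv_nonneg.2 hωi.le)
    refine Integrable.mono'
      (((hpbarint.sub (hpint i)).abs.add hU_int.abs)) (hf_meas i).aestronglyMeasurable ?_
    filter_upwards with x
    have h1 := hf_lb i hωi x
    have h2 := hf_ub x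
    show ‖f i x‖ ≤ |pbar x - p i x| + |U x|
    rw [Real.norm_eq_abs, abs_le]
    constructor
    · have := neg_abs_le (pbar x - p i x)
      have := abs_nonneg (U x)
      linarith
    · have := le_abs_self (U x)
      have := abs_nonneg (pbar x - p i x)
      linarith
  have hf_int0 : ∀ i, Integrable (fun x => ω i * f i x) μ := by
    intro i
    rcases eq_or_lt_of_le (hωnn i) with h | h
    · simpa [← h] using integrable_zero Ω ℝ μ
    · exact (hf_int i h).const_mul _
  have hA_eq : ∑ i, ω i * ∫ x, f i x ∂μ = - Real.log c := by
    have h1 : ∀ i, ω i * ∫ x, f i x ∂μ = ∫ x, ω i * f i x ∂μ := fun i =>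
      (integral_const_mul _ _).symm
    rw [Finset.sum_congr rfl fun i _ => h1 i]
    rw [← integral_finset_sum _ fun i _ => hf_int0 i]
    rw [integral_congr_ae (Filter.Eventually.of_forall hsum_f)]
    rw [integral_neg, integral_mul_const, hpbarnorm, one_mul]
  have hA_nonneg : ∀ i, 0 < ω i → 0 ≤ ∫ x, f i x ∂μ := by
    intro i hωi
    have h := integral_mono (f := fun x => pbar x - p i x) (g := f i)
      (hpbarint.sub (hpint i)) (hf_int i hωi) (fun x => hf_lb i hωi x)
    rw [integral_sub hpbarint (hpint i), hpbarnorm, hpnorm i] at h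
    simpa using h
  have hkl_pbar : ∀ i, 0 < ω i → klDiv μ pbar (p i) = ENNReal.ofReal (∫ x, f i x ∂μ) := by
    intro i hωi
    rw [klDiv, if_pos]
    exact ⟨Filter.Eventually.of_forall (fun x h => hAC i hωi x h), hf_int i hωi⟩
  -- the q side
  have hq_data : ∀ i, 0 < ω i →
      (∀ᵐ x ∂μ, p i x = 0 → q x = 0) ∧
        Integrable (fun x => q x * Real.log (q x / p i x)) μ := by
    intro i hωi
    by_contra h
    exact hcase i hωi (by rw [klDiv, if_neg h])
  have hG_int : ∀ i, 0 < ω i → Integrable (G i) μ := fun i h => (hq_data i h).2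
  have hkl_q : ∀ i, 0 < ω i → klDiv μ q (p i) = ENNReal.ofReal (∫ x, G i x ∂μ) := by
    intro i hωi
    rw [klDiv, if_pos ⟨(hq_data i hωi).1, (hq_data i hωi).2⟩]
  have hq_ae : ∀ᵐ x ∂μ, ∀ i, 0 < ω i → (p i x = 0 → q x = 0) := by
    rw [MeasureTheory.ae_all_iff]
    intro i
    by_cases h : 0 < ω i
    · filter_upwards [(hq_data i h).1] with x hx using fun _ => hx
    · filter_upwards with x hx using absurd hx h
  have hsum_G : ∀ᵐ x ∂μ, ∑ i, ω i * G i x =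
      q x * Real.log (q x / pbar x) - q x * Real.log c := by
    filter_upwards [hq_ae] with x hx
    exact key q x (hqnn x) hx
  set H : Ω → ℝ := fun x => q x * Real.log (q x / pbar x) with hH_def
  have hG_int0 : ∀ i, Integrable (fun x => ω i * G i x) μ := by
    intro i
    rcases eq_or_lt_of_le (hωnn i) with h | h
    · simpa [← h] using integrable_zero Ω ℝ μ
    · exact (hG_int i h).const_mul _
  have hH_int : Integrable H μ := by
    have hint : Integrable (fun x => (∑ i, ω i * G i x) + q x * Real.log c) μ :=
      (integrable_finset_sum _ fun i _ => hG_int0 i).add (hqint.mul_const _)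
    refine hint.congr ?_
    filter_upwards [hsum_G] with x hx
    rw [hH_def]
    dsimp only
    linarith
  have hB_sum : ∑ i, ω i * ∫ x, G i x ∂μ = (∫ x, H x ∂μ) - Real.log c := by
    rw [Finset.sum_congr rfl fun i _ => (integral_const_mul (ω i) (G i)).symm]
    rw [← integral_finset_sum _ fun i _ => hG_int0 i]
    have heq : ∫ x, ∑ i, ω i * G i x ∂μ = ∫ x, (H x - q x * Real.log c) ∂μ :=
      integral_congr_ae (by filter_upwards [hsum_G] with x hx; rw [hx])
    rw [heq, integral_sub hH_int (hqint.mul_const _), integral_mul_const, hqnorm,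
      one_mul]
  have hACq : ∀ᵐ x ∂μ, pbar x = 0 → q x = 0 := by
    filter_upwards [hq_ae] with x hx hpb
    by_contra hq0
    have hp_pos : ∀ i, 0 < ω i → 0 < p i x := by
      intro i hi
      rcases eq_or_lt_of_le (hpnn i x) with h | h
      · exact absurd (hx i hi h.symm) hq0
      · exact h
    have hfac_pos : ∀ i, 0 < p i x ^ ω i := by
      intro i
      rcases eq_or_lt_of_le (hωnn i) with h | h
      · rw [← h, Real.rpow_zero]; exact one_pos
      · exact Real.rpow_pos_of_pos (hp_pos i h) _
    have : 0 < pbar x := by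
      rw [hpbar]
      exact mul_pos (inv_pos.2 hc_pos) (Finset.prod_pos fun i _ => hfac_pos i)
    exact this.ne' hpb
  have hH_nonneg : 0 ≤ ∫ x, H x ∂μ := by
    have h := integral_mono_ae (f := fun x => q x - pbar x) (g := H)
      (hqint.sub hpbarint) hH_int
      (by filter_upwards [hACq] with x hx using
        gibbs_pointwise (hqnn x) (hpbarnn x) hx)
    rw [integral_sub hqint hpbarint, hqnorm, hpbarnorm] at h
    simpa using h
  have hB_nonneg : ∀ i, 0 < ω i → 0 ≤ ∫ x, G i x ∂μ := by
    intro i hωi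
    have h := integral_mono_ae (f := fun x => q x - p i x) (g := G i)
      (hqint.sub (hpint i)) (hG_int i hωi)
      (by filter_upwards [(hq_data i hωi).1] with x hx using
        gibbs_pointwise (hqnn x) (hpnn i x) hx)
    rw [integral_sub hqint (hpint i), hqnorm, hpnorm i] at h
    simpa using h
  -- assemble
  have hreal : ∑ i, ω i * ∫ x, f i x ∂μ ≤ ∑ i, ω i * ∫ x, G i x ∂μ := by
    rw [hA_eq, hB_sum]
    linarith
  have hLHS : ∑ i, ENNReal.ofReal (ω i) * klDiv μ pbar (p i)
      = ENNReal.ofReal (∑ i, ω i * ∫ x, f i x ∂μ) := by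
    rw [ENNReal.ofReal_sum_of_nonneg (fun i _ => by
      rcases eq_or_lt_of_le (hωnn i) with h | h
      · rw [← h, zero_mul]
      · exact mul_nonneg (hωnn i) (hA_nonneg i h))]
    refine (Finset.sum_congr rfl fun i _ => ?_).symm
    rcases eq_or_lt_of_le (hωnn i) with h | h
    · rw [← h]; simp
    · rw [hkl_pbar i h, ENNReal.ofReal_mul (hωnn i)]
  have hRHS : ∑ i, ENNReal.ofReal (ω i) * klDiv μ q (p i)
      = ENNReal.ofReal (∑ i, ω i * ∫ x, G i x ∂μ) := by
    rw [ENNReal.ofReal_sum_of_nonneg (fun i _ => by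
      rcases eq_or_lt_of_le (hωnn i) with h | h
      · rw [← h, zero_mul]
      · exact mul_nonneg (hωnn i) (hB_nonneg i h))]
    refine (Finset.sum_congr rfl fun i _ => ?_).symm
    rcases eq_or_lt_of_le (hωnn i) with h | h
    · rw [← h]; simp
    · rw [hkl_q i h, ENNReal.ofReal_mul (hωnn i)]
  rw [hLHS, hRHS]
  exact ENNReal.ofReal_le_ofReal hreal
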